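/- Let G=(V,E) be a weighted graph with boundary ∂=A⊔B⊔C and fix integers n≥2 and even m≥2. Then the permutation optimization and set-partition optimization satisfy R ≥ 𝒜(A∪B:C)·n(m−2) + Q, where 𝒜(A∪B:C) is the minimal cut area separating A∪B from C and n(m−2)=d(X,id) is the Cayley distance from X to the identity. -/

import Mathlib

open scoped Classical

noncomputable section

namespace RTN

/-! ## Set partitions -/

/-- Number of blocks of a set partition (as an integer). -/
def nb {α : Type*} (p : Setoid α) : ℤ := Nat.card (Quotient p)

/-- The partition distance `d(p,q) = #(p) + #(q) - 2 #(p ⊔ q)`. -/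
def pdist {α : Type*} (p q : Setoid α) : ℤ := nb p + nb q - 2 * nb (p ⊔ q)

lemma pdist_comm {α : Type*} (p q : Setoid α) : pdist p q = pdist q p := by
  unfold pdist
  rw [sup_comm p q]
  ring

/-- `k` is a singlet (block of size one) of the partition `p`. -/
def IsSinglet {α : Type*} (p : Setoid α) (k : α) : Prop := ∀ y, p.r k y → y = k

/-- The number of singlets `#₁(p)` of a partition. -/
def nS {α : Type*} (p : Setoid α) : ℤ := Nat.card {k : α // IsSinglet p k}

/-- The singlet distance `d₁(s₁,s₂) = #₁(s₁) + #₁(s₂) - 2 #₁(s₁ ⊔ s₂)`. -/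
def sdist {α : Type*} (s₁ s₂ : Setoid α) : ℤ := nS s₁ + nS s₂ - 2 * nS (s₁ ⊔ s₂)

/-- The singlet pattern `s(p)`: the coarsest partition whose singlets are exactly
those of `p` (all non-singlet elements lie in one block). -/
def spat {α : Type*} (p : Setoid α) : Setoid α where
  r x y := x = y ∨ (¬ IsSinglet p x ∧ ¬ IsSinglet p y)
  iseqv := by
    refine ⟨fun x => Or.inl rfl, ?_, ?_⟩
    · intro x y h
      rcases h with rfl | ⟨hx, hy⟩
      · exact Or.inl rfl
      · exact Or.inr ⟨hy, hx⟩
    · intro x y z h1 h2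
      rcases h1 with rfl | ⟨hx, hy⟩
      · exact h2
      · rcases h2 with rfl | ⟨_, hz⟩
        · exact Or.inr ⟨hx, hy⟩
        · exact Or.inr ⟨hx, hz⟩

/-- The bit `b^k(p)`: `0` if `p` has a singlet at `k`, else `1`. -/
def bbit {α : Type*} (p : Setoid α) (k : α) : ℤ := if IsSinglet p k then 0 else 1

/-- The size of the block of `p` containing `x`. -/
def blockSize {α : Type*} (p : Setoid α) (x : α) : ℕ := Nat.card {y : α // p.r x y}

noncomputable instance {α : Type*} [Finite α] (s : Setoid α) : Fintype (Quotient s) :=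
  Fintype.ofFinite _

/-! ## Permutations -/

/-- The partition of `α` into orbits (cycles) of a permutation. -/
def orbitSetoid {α : Type*} (g : Equiv.Perm α) : Setoid α where
  r x y := ∃ k : ℤ, (g ^ k) x = y
  iseqv := by
    refine ⟨fun x => ⟨0, by simp⟩, ?_, ?_⟩
    · rintro x y ⟨k, rfl⟩
      exact ⟨-k, by simp [← Equiv.Perm.mul_apply, ← zpow_add]⟩
    · rintro x y z ⟨k, rfl⟩ ⟨l, rfl⟩
      exact ⟨l + k, by rw [zpow_add, Equiv.Perm.mul_apply]⟩

/-- The number of cycles `#(g)` of a permutation (fixed points included). -/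
def ncyc {α : Type*} (g : Equiv.Perm α) : ℤ := nb (orbitSetoid g)

/-- The Cayley distance `d(g,h) = N - #(g h⁻¹)`. -/
def cayley {α : Type*} [Fintype α] (g h : Equiv.Perm α) : ℤ :=
  (Fintype.card α : ℤ) - ncyc (g * h⁻¹)

lemma orbitSetoid_inv {α : Type*} (g : Equiv.Perm α) : orbitSetoid g⁻¹ = orbitSetoid g := by
  apply Setoid.ext
  intro x y
  constructor
  · rintro ⟨k, hk⟩
    exact ⟨-k, by rw [← inv_zpow']; exact hk⟩
  · rintro ⟨k, hk⟩
    exact ⟨-k, by rw [inv_zpow', neg_neg]; exact hk⟩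

lemma cayley_comm {α : Type*} [Fintype α] (g h : Equiv.Perm α) : cayley g h = cayley h g := by
  unfold cayley ncyc
  rw [show h * g⁻¹ = (g * h⁻¹)⁻¹ by rw [mul_inv_rev, inv_inv], orbitSetoid_inv]

/-- Coarse graining of a partition `p` by the blocks of `P(g₀)`: the partition of the set
of blocks of `P(g₀)` induced by `p ⊔ P(g₀)`. -/
def coarse {α : Type*} (g₀ : Equiv.Perm α) (p : Setoid α) :
    Setoid (Quotient (orbitSetoid g₀)) where
  r u v := ∃ x y : α, Quotient.mk (orbitSetoid g₀) x = u ∧ Quotient.mk (orbitSetoid g₀) y = v ∧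
    (p ⊔ orbitSetoid g₀).r x y
  iseqv := by
    refine ⟨?_, ?_, ?_⟩
    · intro u
      obtain ⟨x, rfl⟩ := Quotient.exists_rep u
      exact ⟨x, x, rfl, rfl, (p ⊔ orbitSetoid g₀).iseqv.refl x⟩
    · rintro u v ⟨x, y, hx, hy, hxy⟩
      exact ⟨y, x, hy, hx, (p ⊔ orbitSetoid g₀).iseqv.symm hxy⟩
    · rintro u v w ⟨x, y, hx, hy, hxy⟩ ⟨y', z, hy', hz, hyz⟩
      refine ⟨x, z, hx, hz, ?_⟩
      have h1 : (orbitSetoid g₀).r y y' := Quotient.exact (hy.trans hy'.symm)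
      have h2 : (p ⊔ orbitSetoid g₀).r y y' :=
        (le_sup_right : orbitSetoid g₀ ≤ p ⊔ orbitSetoid g₀) h1
      exact (p ⊔ orbitSetoid g₀).iseqv.trans hxy
        ((p ⊔ orbitSetoid g₀).iseqv.trans h2 hyz)

/-- The coarse graining `q_{g₀}(g) ∈ P_{#(g₀)}` of a permutation `g`. -/
def qc {α : Type*} (g₀ g : Equiv.Perm α) : Setoid (Quotient (orbitSetoid g₀)) :=
  coarse g₀ (orbitSetoid g)

/-! ## Standard reflected-entropy boundary elements -/

/-- `g_B`, the product of `n` disjoint `m`-cycles `(k,ℓ) ↦ (k,ℓ+1)`. -/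
def gB (n m : ℕ) : Equiv.Perm (Fin n × Fin m) :=
  Equiv.prodCongr (Equiv.refl (Fin n)) (finRotate m)

/-- `γ`, cyclically shifting `k ↦ k+1` on the elements with `ℓ` in the lower half,
fixing the rest. -/
def gamma (n m : ℕ) : Equiv.Perm (Fin n × Fin m) where
  toFun x := if m / 2 ≤ (x.2 : ℕ) then (finRotate n x.1, x.2) else x
  invFun x := if m / 2 ≤ (x.2 : ℕ) then ((finRotate n).symm x.1, x.2) else x
  left_inv := by
    intro x
    by_cases h : m / 2 ≤ (x.2 : ℕ) <;> simp [h, -finRotate_apply, -finRotate_symm_apply]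
  right_inv := by
    intro x
    by_cases h : m / 2 ≤ (x.2 : ℕ) <;> simp [h, -finRotate_apply, -finRotate_symm_apply]

/-- `g_A = γ⁻¹ g_B γ`. -/
def gA (n m : ℕ) : Equiv.Perm (Fin n × Fin m) :=
  (gamma n m)⁻¹ * gB n m * gamma n m

/-- For even `m`, `Fin m` splits into an upper and a lower half. -/
def halfEquiv (m : ℕ) (hm : m % 2 = 0) : Fin 2 × Fin (m / 2) ≃ Fin m :=
  finProdFinEquiv.trans (finCongr (by omega))

/-- `X`, the product of the `2n` disjoint `(m/2)`-cycles cyclically permuting the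
upper and the lower half of each block `k`. -/
def Xel (n m : ℕ) (hm : m % 2 = 0) : Equiv.Perm (Fin n × Fin m) :=
  Equiv.prodCongr (Equiv.refl (Fin n))
    ((halfEquiv m hm).permCongr
      (Equiv.prodCongr (Equiv.refl (Fin 2)) (finRotate (m / 2))))

/-- The set of blocks of `P(X)`; it has `2n` elements. -/
abbrev BX (n m : ℕ) (hm : m % 2 = 0) := Quotient (orbitSetoid (Xel n m hm))

/-- `q_A = q_X(g_A) ∈ P_{2n}`. -/
def qAel (n m : ℕ) (hm : m % 2 = 0) : Setoid (BX n m hm) :=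
  qc (Xel n m hm) (gA n m)

/-- `q_B = q_X(g_B) ∈ P_{2n}`. -/
def qBel (n m : ℕ) (hm : m % 2 = 0) : Setoid (BX n m hm) :=
  qc (Xel n m hm) (gB n m)

/-! ## Doubled elements (two copies) -/

/-- Two copies of the index set `{1,…,mn}`. -/
abbrev DIdx (n m : ℕ) := (Fin n × Fin m) ⊕ (Fin n × Fin m)

/-- `g̃_A = g_A ⊕ g_A`. -/
def gAt (n m : ℕ) : Equiv.Perm (DIdx n m) := Equiv.sumCongr (gA n m) (gA n m)

/-- `g̃_B = g_B ⊕ g_B`. -/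
def gBt (n m : ℕ) : Equiv.Perm (DIdx n m) := Equiv.sumCongr (gB n m) (gB n m)

/-- `X̃ = X ⊕ X`. -/
def Xt (n m : ℕ) (hm : m % 2 = 0) : Equiv.Perm (DIdx n m) :=
  Equiv.sumCongr (Xel n m hm) (Xel n m hm)

/-- The set of blocks of `P(X̃)`; it has `4n` elements. -/
abbrev BXt (n m : ℕ) (hm : m % 2 = 0) := Quotient (orbitSetoid (Xt n m hm))

/-- `q̃_A = q_{X̃}(g̃_A) ∈ P_{4n}`. -/
def qAt (n m : ℕ) (hm : m % 2 = 0) : Setoid (BXt n m hm) :=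
  qc (Xt n m hm) (gAt n m)

/-- `q̃_B = q_{X̃}(g̃_B) ∈ P_{4n}`. -/
def qBt (n m : ℕ) (hm : m % 2 = 0) : Setoid (BXt n m hm) :=
  qc (Xt n m hm) (gBt n m)

/-- A block of `P(X̃)` lies in the first copy. -/
def inCopy1 {n m : ℕ} {hm : m % 2 = 0} (u : BXt n m hm) : Prop :=
  ∃ x, Quotient.mk (orbitSetoid (Xt n m hm)) (Sum.inl x) = u

/-- `#₁⁽¹⁾(q)`: the number of singlets of `q` among the first-copy positions. -/
def nS1 {n m : ℕ} {hm : m % 2 = 0} (q : Setoid (BXt n m hm)) : ℤ :=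
  Nat.card {u : BXt n m hm // IsSinglet q u ∧ inCopy1 u}

/-- `#₁⁽²⁾(q)`: the number of singlets of `q` among the second-copy positions. -/
def nS2 {n m : ℕ} {hm : m % 2 = 0} (q : Setoid (BXt n m hm)) : ℤ :=
  Nat.card {u : BXt n m hm // IsSinglet q u ∧ ¬ inCopy1 u}

/-- `τ ∈ P_{4n}`, the two-block partition separating the two copies. -/
def tau (n m : ℕ) (hm : m % 2 = 0) : Setoid (BXt n m hm) where
  r u v := inCopy1 u ↔ inCopy1 v
  iseqv := ⟨fun _ => Iff.rfl, Iff.symm, Iff.trans⟩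

/-! ## Graphs, cuts and optimization programs -/

variable {V : Type*}

/-- Sum of an edge function along (the edge list of) a walk, with multiplicity. -/
def wkSum {β : Type*} [AddCommMonoid β] {G : SimpleGraph V} {x y : V}
    (f : Sym2 V → β) (L : G.Walk x y) : β :=
  (L.edges.map f).sum

variable [Fintype V]

/-- Sum of an edge weight function over a set of edges. -/
def wsum (f : Sym2 V → ℝ) (S : Set (Sym2 V)) : ℝ :=
  ∑ e ∈ Finset.univ.filter (· ∈ S), f e

/-- The cut surface `μ(r)`: edges of `G` with one endpoint in `r`, the other outside. -/
def mu (G : SimpleGraph V) (r : Set V) : Set (Sym2 V) :=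
  {e | e ∈ G.edgeSet ∧ ∃ x y, e = s(x, y) ∧ x ∈ r ∧ y ∉ r}

/-- `μ(r₁:r₂)`: edges of `G` with an endpoint in `r₁` and an endpoint in `r₂`. -/
def mu2 (G : SimpleGraph V) (r₁ r₂ : Set V) : Set (Sym2 V) :=
  {e | e ∈ G.edgeSet ∧ ∃ x y, e = s(x, y) ∧ x ∈ r₁ ∧ y ∈ r₂}

/-- `r` is a cut for `X : Y`. -/
def IsCut (X Y r : Set V) : Prop := X ⊆ r ∧ Y ⊆ rᶜ

/-- The minimal cut area `𝒜(X:Y)`. -/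
def minCut (G : SimpleGraph V) (w : Sym2 V → ℝ) (X Y : Set V) : ℝ :=
  sInf {a | ∃ r : Set V, IsCut X Y r ∧ a = wsum w (mu G r)}

/-- `(α,β,γ)` is a triway cut for `(A,B,C)`. -/
def IsTriway (A B C α β γ : Set V) : Prop :=
  α ∪ β ∪ γ = Set.univ ∧ Disjoint α β ∧ Disjoint β γ ∧ Disjoint α γ ∧
    A ⊆ α ∧ B ⊆ β ∧ C ⊆ γ

/-- The area of a triway cut with tensions `(t_{A:B}, t_{B:C}, t_{C:A})`. -/
def triArea (G : SimpleGraph V) (w : Sym2 V → ℝ) (tAB tBC tCA : ℝ)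
    (α β γ : Set V) : ℝ :=
  tAB * wsum w (mu2 G α β) + tBC * wsum w (mu2 G β γ) + tCA * wsum w (mu2 G γ α)

/-- The minimal triway cut area `𝒜_t(A:B:C)`. -/
def triCut (G : SimpleGraph V) (w : Sym2 V → ℝ) (tAB tBC tCA : ℝ)
    (A B C : Set V) : ℝ :=
  sInf {a | ∃ α β γ : Set V, IsTriway A B C α β γ ∧ a = triArea G w tAB tBC tCA α β γ}

/-- Boundary data: `∂ = A ⊔ B ⊔ C` (pairwise disjoint). -/
def Bdy (A B C : Set V) : Prop := Disjoint A B ∧ Disjoint A C ∧ Disjoint B C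

/-! ### The permutation optimization `R` -/

/-- The symmetric edge function induced by the Cayley distance of a vertex
configuration of permutations. -/
def permE {ι : Type*} [Fintype ι] (g : V → Equiv.Perm ι) : Sym2 V → ℝ :=
  Sym2.lift ⟨fun x y => (cayley (g x) (g y) : ℝ),
    fun x y => congrArg Int.cast (cayley_comm (g x) (g y))⟩

/-- The free energy `R(g) = Σ_e w(e) d(g(x),g(y))`. -/
def Renergy {ι : Type*} [Fintype ι] (G : SimpleGraph V) (w : Sym2 V → ℝ)
    (g : V → Equiv.Perm ι) : ℝ :=
  wsum (fun e => w e * permE g e) G.edgeSet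

/-- The optimal value `R` of the permutation optimization. -/
def Rval {ι : Type*} [Fintype ι] (G : SimpleGraph V) (w : Sym2 V → ℝ)
    (A B C : Set V) (g₁ g₂ : Equiv.Perm ι) : ℝ :=
  sInf {a | ∃ g : V → Equiv.Perm ι,
    (∀ v ∈ A, g v = g₁) ∧ (∀ v ∈ B, g v = g₂) ∧ (∀ v ∈ C, g v = 1) ∧
    a = Renergy G w g}

/-! ### The set-partition optimization `Q` -/

/-- The symmetric integer edge function induced by the partition distance of a vertex
configuration of partitions. -/
def partEZ {κ : Type*} (q : V → Setoid κ) : Sym2 V → ℤ :=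
  Sym2.lift ⟨fun x y => pdist (q x) (q y), fun x y => pdist_comm (q x) (q y)⟩

/-- The free energy `Q(q) = Σ_e w(e) d(q(x),q(y))`. -/
def Qenergy {κ : Type*} (G : SimpleGraph V) (w : Sym2 V → ℝ)
    (q : V → Setoid κ) : ℝ :=
  wsum (fun e => w e * (partEZ q e : ℝ)) G.edgeSet

/-- The optimal value `Q` of the set-partition optimization. -/
def Qval {κ : Type*} (G : SimpleGraph V) (w : Sym2 V → ℝ)
    (A B C : Set V) (q₁ q₂ : Setoid κ) : ℝ :=
  sInf {a | ∃ q : V → Setoid κ,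
    (∀ v ∈ A, q v = q₁) ∧ (∀ v ∈ B, q v = q₂) ∧ (∀ v ∈ C, q v = ⊥) ∧
    a = Qenergy G w q}

/-! ### The Boolean optimization `B` -/

/-- The Hamming distance between two bit strings. -/
def ham {κ : Type*} [Fintype κ] (b₁ b₂ : κ → Bool) : ℤ :=
  ∑ k : κ, if b₁ k = b₂ k then 0 else 1

/-- The bit string `b(q)` of a partition: `false` exactly at singlets. -/
def bvec {κ : Type*} (p : Setoid κ) : κ → Bool :=
  fun u => if IsSinglet p u then false else true

/-- Feasibility of `r` for the Boolean program at configuration `b`. -/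
def Bfeas {κ : Type*} [Fintype κ] (G : SimpleGraph V) (A B : Set V) (n : ℕ)
    (b : V → κ → Bool) (r : Sym2 V → ℕ) : Prop :=
  (∀ x ∈ A, ∀ y ∈ B, ∀ L : G.Walk x y,
    2 ∣ wkSum (fun e => (r e : ℤ)) L ∧
    wkSum (fun e => (r e : ℤ)) L ≥
      2 * ((n : ℤ) - if ∀ v ∈ L.support, ∀ k, b v k = true then 1 else 0)) ∧
  (∀ x y : V, G.Adj x y → (r s(x, y) : ℤ) ≥ ⌈(ham (b x) (b y) : ℚ) / 2⌉)

/-- The inner Boolean optimum `B(b)` at a fixed Boolean configuration `b`. -/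
def BvalAt {κ : Type*} [Fintype κ] (G : SimpleGraph V) (w : Sym2 V → ℝ)
    (A B : Set V) (n : ℕ) (b : V → κ → Bool) : ℝ :=
  sInf {a | ∃ r : Sym2 V → ℕ, Bfeas G A B n b r ∧
    a = wsum (fun e => w e * (r e : ℝ)) G.edgeSet}

/-- The optimal value `B` of the Boolean optimization. -/
def Bval (κ : Type*) [Fintype κ] (G : SimpleGraph V) (w : Sym2 V → ℝ)
    (A B C : Set V) (n : ℕ) : ℝ :=
  sInf {a | ∃ b : V → κ → Bool,
    (∀ v ∈ A ∪ B, ∀ k, b v k = true) ∧ (∀ v ∈ C, ∀ k, b v k = false) ∧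
    ∃ r : Sym2 V → ℕ, Bfeas G A B n b r ∧
      a = wsum (fun e => w e * (r e : ℝ)) G.edgeSet}

/-! ### The integer program `I` -/

/-- Feasibility of `(ρ,σ)` for the integer program. -/
def IPfeas (G : SimpleGraph V) (A B C : Set V) (n : ℕ) (ρ σ : Sym2 V → ℕ) : Prop :=
  (∀ x ∈ A, ∀ y ∈ B, ∀ L : G.Walk x y,
    2 ∣ wkSum (fun e => (σ e : ℤ) + (ρ e : ℤ)) L ∧
    wkSum (fun e => (σ e : ℤ) + (ρ e : ℤ)) L ≥
      2 * ((n : ℤ) - if wkSum (fun e => (ρ e : ℤ)) L = 0 then 1 else 0)) ∧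
  (∀ x ∈ A ∪ B, ∀ y ∈ C, ∀ L : G.Walk x y,
    wkSum (fun e => (ρ e : ℤ)) L ≥ (n : ℤ))

/-- The objective of the integer program. -/
def IPobj (G : SimpleGraph V) (w : Sym2 V → ℝ) (ρ σ : Sym2 V → ℕ) : ℝ :=
  wsum (fun e => w e * ((σ e : ℝ) + (ρ e : ℝ))) G.edgeSet

/-- The optimal value `I` of the integer program. -/
def Ival (G : SimpleGraph V) (w : Sym2 V → ℝ) (A B C : Set V) (n : ℕ) : ℝ :=
  sInf {a | ∃ ρ σ : Sym2 V → ℕ, IPfeas G A B C n ρ σ ∧ a = IPobj G w ρ σ}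

/-! ### The ℓ-intersecting cut problem `M` -/

/-- Feasibility for the `ℓ`-intersecting cut problem with boundary sets
`Γ₀, …, Γ_ℓ` and `C`, for a half-integer valued `ϱ`. -/
def Mfeas (G : SimpleGraph V) (Γ : ℕ → Set V) (ℓ : ℕ) (C : Set V)
    (ϱ : Sym2 V → ℚ) : Prop :=
  (∀ e, ∃ j : ℕ, ϱ e = (j : ℚ) / 2) ∧
  (∀ k k' : ℕ, k ≤ ℓ → k' ≤ ℓ → ∀ x ∈ Γ k, ∀ y ∈ Γ k', ∀ L : G.Walk x y,
    ∃ j : ℕ, wkSum ϱ L = |(k : ℚ) - (k' : ℚ)| + (j : ℚ)) ∧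
  (∀ k : ℕ, k ≤ ℓ → ∀ x ∈ Γ k, ∀ y ∈ C, ∀ L : G.Walk x y,
    ∃ j : ℕ, wkSum ϱ L = (ℓ : ℚ) / 2 + (j : ℚ))

/-- The objective of the `ℓ`-intersecting cut problem. -/
def Mobj (G : SimpleGraph V) (w : Sym2 V → ℝ) (ϱ : Sym2 V → ℚ) : ℝ :=
  wsum (fun e => w e * (ϱ e : ℝ)) G.edgeSet

/-- The optimal value `M` of the `ℓ`-intersecting cut problem. -/
def Mval (G : SimpleGraph V) (w : Sym2 V → ℝ) (Γ : ℕ → Set V) (ℓ : ℕ)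
    (C : Set V) : ℝ :=
  sInf {a | ∃ ϱ : Sym2 V → ℚ, Mfeas G Γ ℓ C ϱ ∧ a = Mobj G w ϱ}

/-- The complementary reduced graph `G^c`: the edges of `G` not lying entirely
inside `V'`. -/
def reducedGraph (G : SimpleGraph V) (V' : Set V) : SimpleGraph V where
  Adj x y := G.Adj x y ∧ ¬ (x ∈ V' ∧ y ∈ V')
  symm := by
    constructor
    intro x y h
    exact ⟨h.1.symm, fun hc => h.2 ⟨hc.2, hc.1⟩⟩
  loopless := by
    constructor
    intro x h
    exact G.loopless.irrefl x h.1

end RTN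

theorem Equiv.Perm.apply_inv_self {β : Type*} (f : Equiv.Perm β) (x : β) : f (f⁻¹ x) = x :=
  f.apply_symm_apply x

namespace RTNAux
open RTN Equiv Equiv.Perm

variable {α : Type*}

/-! ### Counting blocks -/

/-- The canonical map between quotients for comparable setoids. -/
def quotMap (p q : Setoid α) (h : p ≤ q) : Quotient p → Quotient q :=
  Quotient.map' (s₁ := p) (s₂ := q) id (fun _ _ hab => h hab)

lemma quot_map_surj {p q : Setoid α} (h : p ≤ q) :
    Function.Surjective (quotMap p q h) := by
  intro u
  obtain ⟨x, rfl⟩ := Quotient.exists_rep u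
  exact ⟨Quotient.mk p x, rfl⟩

lemma nb_antitone [Finite α] {p q : Setoid α} (h : p ≤ q) : nb q ≤ nb p := by
  have := Nat.card_le_card_of_surjective _ (quot_map_surj h)
  unfold nb
  exact_mod_cast this

lemma nb_nonneg (p : Setoid α) : 0 ≤ nb p := Int.ofNat_nonneg _

/-- If `p ≤ q` and `p` has no more blocks, then `p = q`. -/
lemma eq_of_le_of_nb_le [Finite α] {p q : Setoid α} (h : p ≤ q) (hc : nb p ≤ nb q) :
    p = q := by
  classical
  have := Fintype.ofFinite α
  have hcards : Nat.card (Quotient p) = Nat.card (Quotient q) :=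
    le_antisymm (by unfold nb at hc; exact_mod_cast hc)
      (Nat.card_le_card_of_surjective _ (quot_map_surj h))
  set f := quotMap p q h with hf
  have hbij : Function.Bijective f := by
    rw [Fintype.bijective_iff_surjective_and_card]
    refine ⟨quot_map_surj h, ?_⟩
    rw [← Nat.card_eq_fintype_card, ← Nat.card_eq_fintype_card, hcards]
  apply Setoid.ext
  intro a b
  constructor
  · exact fun hab => h hab
  · intro hab
    have : f (Quotient.mk p a) = f (Quotient.mk p b) := Quotient.sound' hab
    have := hbij.1 this
    exact Quotient.exact' this

/-- Strict block-count increase when refining separates a related pair. -/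
lemma nb_strict [Finite α] {p q : Setoid α} (h : p ≤ q) {a b : α}
    (hab : ¬ p.r a b) (hqab : q.r a b) : nb q + 1 ≤ nb p := by
  by_contra hcon
  push_neg at hcon
  have : nb p ≤ nb q := by omega
  exact hab ((eq_of_le_of_nb_le h this) ▸ hqab)

lemma nb_bot [Finite α] : nb (⊥ : Setoid α) = Nat.card α := by
  unfold nb
  congr 1
  apply Nat.card_congr
  refine ⟨Quotient.lift id (fun a b hab => hab), Quotient.mk ⊥, ?_, fun x => rfl⟩
  intro u
  obtain ⟨x, rfl⟩ := Quotient.exists_rep u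
  rfl

/-- Build an equivalence from a characterization of a setoid by a function. -/
noncomputable def quotEquivOfRel (p : Setoid α) {β : Type*} (f : α → β)
    (hiff : ∀ x y, p.r x y ↔ f x = f y) (hsurj : Function.Surjective f) :
    Quotient p ≃ β := by
  refine Equiv.ofBijective (Quotient.lift f (fun a b hab => (hiff a b).1 hab)) ⟨?_, ?_⟩
  · intro u v
    obtain ⟨x, rfl⟩ := Quotient.exists_rep u
    obtain ⟨y, rfl⟩ := Quotient.exists_rep v
    exact fun hxy => Quotient.sound ((hiff x y).2 hxy)
  · intro b
    obtain ⟨x, rfl⟩ := hsurj b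
    exact ⟨Quotient.mk p x, rfl⟩

lemma nb_eq_of_rel (p : Setoid α) {β : Type*} (f : α → β)
    (hiff : ∀ x y, p.r x y ↔ f x = f y) (hsurj : Function.Surjective f) :
    nb p = Nat.card β := by
  unfold nb; congr 1; exact Nat.card_congr (quotEquivOfRel p f hiff hsurj)

/-! ### Orbit setoid basics -/

lemma orbit_rel (g : Perm α) (x y : α) :
    (orbitSetoid g).r x y ↔ g.SameCycle x y := Iff.rfl

lemma orbit_step (g : Perm α) (x : α) : (orbitSetoid g).r x (g x) :=
  ⟨1, by simp⟩

lemma orbit_le_of_step {S : Setoid α} {p : Perm α} (hp : ∀ x, S.r x (p x)) :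
    orbitSetoid p ≤ S := by
  have key : ∀ (k : ℤ) (x : α), S.r x ((p ^ k) x) := by
    intro k
    induction k using Int.induction_on with
    | zero => intro x; simpa using S.iseqv.refl x
    | succ i ih =>
        intro x
        rw [zpow_add_one, Equiv.Perm.mul_apply]
        exact S.iseqv.trans (hp x) (ih (p x))
    | pred i ih =>
        intro x
        rw [zpow_sub_one, Equiv.Perm.mul_apply]
        have hx : S.r x (p⁻¹ x) := by
          have := hp (p⁻¹ x)
          rw [Equiv.Perm.apply_inv_self] at this
          exact S.iseqv.symm this
        exact S.iseqv.trans hx (ih (p⁻¹ x))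
  rintro x y ⟨k, rfl⟩
  exact key k x

lemma orbit_mul_le (f g : Perm α) :
    orbitSetoid (f * g) ≤ orbitSetoid f ⊔ orbitSetoid g := by
  apply orbit_le_of_step
  intro x
  have h1 : (orbitSetoid f ⊔ orbitSetoid g).r x (g x) :=
    le_sup_right (α := Setoid α) (orbit_step g x)
  have h2 : (orbitSetoid f ⊔ orbitSetoid g).r (g x) (f (g x)) :=
    le_sup_left (α := Setoid α) (orbit_step f (g x))
  exact (orbitSetoid f ⊔ orbitSetoid g).iseqv.trans h1 h2

lemma invariant_zpow {β : Type*} {p : Perm α} {f : α → β}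
    (hf : ∀ x, f (p x) = f x) : ∀ (k : ℤ) (x : α), f ((p ^ k) x) = f x := by
  intro k
  induction k using Int.induction_on with
  | zero => simp
  | succ i ih =>
      intro x
      rw [zpow_add_one, Equiv.Perm.mul_apply, ih, hf]
  | pred i ih =>
      intro x
      rw [zpow_sub_one, Equiv.Perm.mul_apply, ih]
      have := hf (p⁻¹ x)
      rw [Equiv.Perm.apply_inv_self] at this
      exact this.symm

lemma orbit_one : orbitSetoid (1 : Perm α) = ⊥ := by
  apply Setoid.ext
  intro x y
  constructor
  · rintro ⟨k, rfl⟩; simp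
  · rintro rfl; exact ⟨0, by simp⟩

lemma ncyc_one [Finite α] : ncyc (1 : Perm α) = Nat.card α := by
  unfold ncyc; rw [orbit_one, nb_bot]

end RTNAux
namespace RTNAux
open RTN Equiv Equiv.Perm

variable {α : Type*}

lemma swap_zpow [DecidableEq α] (a b : α) (k : ℤ) :
    (swap a b) ^ k = 1 ∨ (swap a b) ^ k = swap a b := by
  have h2 : (swap a b) ^ (2 : ℤ) = 1 := by
    rw [zpow_two]; exact swap_mul_self a b
  have hk : (swap a b) ^ k = (swap a b) ^ (k % 2) := by
    conv_lhs => rw [← Int.emod_add_mul_ediv k 2]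
    rw [zpow_add, zpow_mul, h2, one_zpow, mul_one]
  rcases Int.emod_two_eq_zero_or_one k with h | h
  · left; rw [hk, h, zpow_zero]
  · right; rw [hk, h, zpow_one]

lemma orbit_swap_iff [DecidableEq α] (a b : α) (x y : α) :
    (orbitSetoid (swap a b)).r x y ↔
      x = y ∨ (x = a ∧ y = b) ∨ (x = b ∧ y = a) := by
  constructor
  · rintro ⟨k, rfl⟩
    rcases swap_zpow a b k with h | h
    · rw [h]; left; simp
    · rw [h]
      rcases eq_or_ne x a with rfl | hxa
      · right; left; exact ⟨rfl, (swap_apply_left x b).symm ▸ rfl⟩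
      · rcases eq_or_ne x b with rfl | hxb
        · right; right; exact ⟨rfl, by rw [swap_apply_right]⟩
        · left; rw [swap_apply_of_ne_of_ne hxa hxb]
  · rintro (rfl | ⟨rfl, rfl⟩ | ⟨rfl, rfl⟩)
    · exact ⟨0, by simp⟩
    · exact ⟨1, by simp⟩
    · exact ⟨1, by simp [swap_apply_right]⟩

/-- Explicit description of the join of a setoid with the pair `{a,b}`. -/
def joinPair (s : Setoid α) (a b : α) : Setoid α where
  r x y := s.r x y ∨ (s.r x a ∧ s.r b y) ∨ (s.r x b ∧ s.r a y)
  iseqv := by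
    constructor
    · intro x; exact Or.inl (s.iseqv.refl x)
    · rintro x y (h | ⟨h1, h2⟩ | ⟨h1, h2⟩)
      · exact Or.inl (s.iseqv.symm h)
      · exact Or.inr (Or.inr ⟨s.iseqv.symm h2, s.iseqv.symm h1⟩)
      · exact Or.inr (Or.inl ⟨s.iseqv.symm h2, s.iseqv.symm h1⟩)
    · rintro x y z (h | ⟨h1, h2⟩ | ⟨h1, h2⟩) (h' | ⟨h1', h2'⟩ | ⟨h1', h2'⟩)
      · exact Or.inl (s.iseqv.trans h h')
      · exact Or.inr (Or.inl ⟨s.iseqv.trans h h1', h2'⟩)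
      · exact Or.inr (Or.inr ⟨s.iseqv.trans h h1', h2'⟩)
      · exact Or.inr (Or.inl ⟨h1, s.iseqv.trans h2 h'⟩)
      · exact Or.inl (s.iseqv.trans h1 (s.iseqv.trans (s.iseqv.symm (s.iseqv.trans h2 h1')) h2'))
      · exact Or.inl (s.iseqv.trans h1 h2')
      · exact Or.inr (Or.inr ⟨h1, s.iseqv.trans h2 h'⟩)
      · exact Or.inl (s.iseqv.trans h1 h2')
      · exact Or.inl (s.iseqv.trans h1 (s.iseqv.trans (s.iseqv.symm (s.iseqv.trans h2 h1')) h2'))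

lemma sup_swap_eq_joinPair [DecidableEq α] (s : Setoid α) (a b : α) :
    s ⊔ orbitSetoid (swap a b) = joinPair s a b := by
  apply le_antisymm
  · apply sup_le
    · intro x y h; exact Or.inl h
    · intro x y h
      rcases (orbit_swap_iff a b x y).1 h with rfl | ⟨rfl, rfl⟩ | ⟨rfl, rfl⟩
      · exact Or.inl (s.iseqv.refl x)
      · exact Or.inr (Or.inl ⟨s.iseqv.refl x, s.iseqv.refl y⟩)
      · exact Or.inr (Or.inr ⟨s.iseqv.refl x, s.iseqv.refl y⟩)
  · rintro x y (h | ⟨h1, h2⟩ | ⟨h1, h2⟩)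
    · exact le_sup_left (α := Setoid α) h
    · have hxa : (s ⊔ orbitSetoid (swap a b)).r x a := le_sup_left (α := Setoid α) h1
      have hab : (s ⊔ orbitSetoid (swap a b)).r a b :=
        le_sup_right (α := Setoid α) ((orbit_swap_iff a b a b).2 (Or.inr (Or.inl ⟨rfl, rfl⟩)))
      have hby : (s ⊔ orbitSetoid (swap a b)).r b y := le_sup_left (α := Setoid α) h2
      exact Setoid.trans' _ (Setoid.trans' _ hxa hab) hby
    · have hxb : (s ⊔ orbitSetoid (swap a b)).r x b := le_sup_left (α := Setoid α) h1
      have hba : (s ⊔ orbitSetoid (swap a b)).r b a :=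
        le_sup_right (α := Setoid α) ((orbit_swap_iff a b b a).2 (Or.inr (Or.inr ⟨rfl, rfl⟩)))
      have hay : (s ⊔ orbitSetoid (swap a b)).r a y := le_sup_left (α := Setoid α) h2
      exact Setoid.trans' _ (Setoid.trans' _ hxb hba) hay

/-- Joining with a pair decreases the number of blocks by at most one. -/
lemma nb_sup_swap [Finite α] [DecidableEq α] (s : Setoid α) (a b : α) :
    nb s - 1 ≤ nb (s ⊔ orbitSetoid (swap a b)) := by
  classical
  have := Fintype.ofFinite α
  rw [sup_swap_eq_joinPair]
  set q := joinPair s a b with hq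
  have hle : s ≤ q := fun x y h => Or.inl h
  -- the induced map is injective away from the class of `b`
  set f : Quotient s → Quotient q := quotMap s q hle with hf
  have hinj : ∀ u v : Quotient s, u ≠ Quotient.mk s b → v ≠ Quotient.mk s b →
      f u = f v → u = v := by
    intro u v hu hv huv
    obtain ⟨x, rfl⟩ := Quotient.exists_rep u
    obtain ⟨y, rfl⟩ := Quotient.exists_rep v
    have hxy : q.r x y := Quotient.exact' huv
    rcases hxy with h | ⟨h1, h2⟩ | ⟨h1, h2⟩
    · exact Quotient.sound h
    · exact absurd (Quotient.sound (s.iseqv.symm h2) : Quotient.mk s y = Quotient.mk s b) hv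
    · exact absurd (Quotient.sound h1 : Quotient.mk s x = Quotient.mk s b) hu
  -- count
  have h1 : Nat.card {u : Quotient s // u ≠ Quotient.mk s b} ≤ Nat.card (Quotient q) := by
    apply Nat.card_le_card_of_injective (fun u => f u.1)
    intro u v huv
    exact Subtype.ext (hinj u.1 v.1 u.2 v.2 huv)
  have h2 : Nat.card {u : Quotient s // u ≠ Quotient.mk s b} =
      Nat.card (Quotient s) - 1 := by
    rw [Nat.card_eq_fintype_card, Nat.card_eq_fintype_card, Fintype.card_subtype_compl,
      Fintype.card_subtype_eq]
  unfold nb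
  omega

/-- Merging: multiplying by `swap a b` joins the cycles of `a` and `b`. -/
lemma merge_lemma [Finite α] [DecidableEq α] {h : Perm α} {a b : α} (hab : a ≠ b)
    (hnot : ¬ h.SameCycle a b) : (swap a b * h).SameCycle a b := by
  by_contra hcon
  have key : ∀ j : ℕ, ((swap a b * h) ^ j) a = (h ^ j) a := by
    intro j
    induction j with
    | zero => simp
    | succ i ih =>
        simp only [pow_succ', Equiv.Perm.mul_apply]
        rw [ih]
        set z := h ((h ^ i) a) with hz
        rcases eq_or_ne z a with hza | hza
        · exfalso
          apply hcon
          refine ⟨((i + 1 : ℕ) : ℤ), ?_⟩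
          rw [zpow_natCast]
          simp only [pow_succ', Equiv.Perm.mul_apply]
          rw [ih, ← hz, hza, swap_apply_left]
        · rcases eq_or_ne z b with hzb | hzb
          · exfalso
            apply hnot
            refine ⟨((i + 1 : ℕ) : ℤ), ?_⟩
            rw [zpow_natCast]
            simp only [pow_succ', Equiv.Perm.mul_apply]
            rw [← hz, hzb]
          · exact swap_apply_of_ne_of_ne hza hzb
  have h1 : (swap a b * h).SameCycle a (h⁻¹ b) := by
    apply Equiv.Perm.SameCycle.symm
    refine ⟨1, ?_⟩
    rw [zpow_one, Equiv.Perm.mul_apply, Equiv.Perm.apply_inv_self, swap_apply_right]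
  obtain ⟨i, -, hi⟩ := h1.exists_pow_eq'
  apply hnot
  refine ⟨((i + 1 : ℕ) : ℤ), ?_⟩
  rw [zpow_natCast, pow_succ', Equiv.Perm.mul_apply, ← key i, hi, Equiv.Perm.apply_inv_self]

end RTNAux
namespace RTNAux
open RTN Equiv Equiv.Perm

variable {α : Type*}

lemma swap_orbit_le [DecidableEq α] {S : Setoid α} {a b : α} (hS : S.r a b) :
    orbitSetoid (swap a b) ≤ S := by
  intro x y hxy
  rcases (orbit_swap_iff a b x y).1 hxy with rfl | ⟨rfl, rfl⟩ | ⟨rfl, rfl⟩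
  · exact S.iseqv.refl x
  · exact hS
  · exact S.iseqv.symm hS

lemma cayley_self [Fintype α] (g : Perm α) : cayley g g = 0 := by
  unfold cayley
  rw [mul_inv_cancel, ncyc_one, Nat.card_eq_fintype_card]
  ring

/-- The key combinatorial inequality for the Cayley distance. -/
lemma core [Fintype α] (Q : Setoid α) (g h : Perm α) :
    (ncyc h - 2 * nb (orbitSetoid h ⊔ Q)) - (ncyc g - 2 * nb (orbitSetoid g ⊔ Q)) ≤
      cayley g h := by
  classical
  suffices H : ∀ (N : ℕ) (h : Perm α), (g * h⁻¹).support.card ≤ N →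
      (ncyc h - 2 * nb (orbitSetoid h ⊔ Q)) - (ncyc g - 2 * nb (orbitSetoid g ⊔ Q)) ≤
      cayley g h from H _ h le_rfl
  intro N
  induction N with
  | zero =>
      intro h hcard
      have hsupp : (g * h⁻¹).support = ∅ := Finset.card_eq_zero.1 (Nat.le_zero.1 hcard)
      have : g = h := mul_inv_eq_one.1 (Equiv.Perm.support_eq_empty_iff.1 hsupp)
      subst this
      rw [cayley_self]
      omega
  | succ N ih =>
      intro h hcard
      rcases eq_or_ne g h with rfl | hgh
      · rw [cayley_self]; omega
      have hσne : g * h⁻¹ ≠ 1 := fun hone => hgh (mul_inv_eq_one.1 hone)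
      set σ := g * h⁻¹ with hσdef
      obtain ⟨a, ha⟩ : ∃ a, σ a ≠ a := by
        by_contra hall
        push_neg at hall
        exact hσne (Equiv.ext fun x => hall x)
      set b := σ a with hbdef
      have hba : b ≠ a := ha
      have hσb : σ b ≠ b := fun he => ha (σ.injective he)
      set τ : Perm α := swap a b with hτdef
      set h' : Perm α := τ * h with hh'def
      have hσ' : g * h'⁻¹ = σ * τ := by
        rw [hh'def, mul_inv_rev, hτdef, swap_inv, ← mul_assoc, hσdef]
      -- support decreases
      have hsub : (σ * τ).support ⊆ σ.support := by
        intro x hx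
        rw [Equiv.Perm.mem_support] at hx ⊢
        rcases eq_or_ne x a with rfl | hxa
        · exact ha
        rcases eq_or_ne x b with rfl | hxb
        · exfalso
          apply hx
          rw [Equiv.Perm.mul_apply, hτdef, swap_apply_right, ← hbdef]
        · intro hσx
          apply hx
          rw [Equiv.Perm.mul_apply, hτdef, swap_apply_of_ne_of_ne hxa hxb, hσx]
      have hbnot : b ∉ (σ * τ).support := by
        rw [Equiv.Perm.mem_support, not_not, Equiv.Perm.mul_apply, hτdef,
          swap_apply_right, ← hbdef]
      have hcard' : (g * h'⁻¹).support.card ≤ N := by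
        rw [hσ']
        have hss : (σ * τ).support ⊂ σ.support :=
          ⟨hsub, fun hback => hbnot (hback (Equiv.Perm.mem_support.2 hσb))⟩
        have := Finset.card_lt_card hss
        omega
      -- cycle count increases by at least one
      have hfixb : (σ * τ) b = b := by
        rw [Equiv.Perm.mul_apply, hτdef, swap_apply_right, ← hbdef]
      have hpq : orbitSetoid (σ * τ) ≤ orbitSetoid σ := by
        refine (orbit_mul_le σ τ).trans (sup_le le_rfl ?_)
        exact swap_orbit_le ⟨1, by simpa using hbdef.symm⟩
      have hnotp : ¬ (orbitSetoid (σ * τ)).r b a := by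
        rintro ⟨k, hk⟩
        rw [Equiv.Perm.zpow_apply_eq_self_of_apply_eq_self hfixb] at hk
        exact hba hk
      have hqba : (orbitSetoid σ).r b a :=
        (orbitSetoid σ).iseqv.symm ⟨1, by simpa using hbdef.symm⟩
      have hcyc : ncyc σ + 1 ≤ ncyc (σ * τ) := nb_strict hpq hnotp hqba
      -- Cayley distance decreases by at least one
      have hcay : cayley g h' + 1 ≤ cayley g h := by
        unfold cayley
        rw [hσ', ← hσdef]
        omega
      -- the potential moves by at most one
      have hF1a : orbitSetoid h ≤ orbitSetoid h' ⊔ orbitSetoid τ := by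
        have hth : τ * h' = h := by rw [hh'def, ← mul_assoc, hτdef, swap_mul_self, one_mul]
        have := orbit_mul_le τ h'
        rw [hth] at this
        exact this.trans (by rw [sup_comm])
      have hF1b : orbitSetoid h' ≤ orbitSetoid h ⊔ orbitSetoid τ := by
        have := orbit_mul_le τ h
        rw [← hh'def] at this
        exact this.trans (by rw [sup_comm])
      have hstep : (ncyc h - 2 * nb (orbitSetoid h ⊔ Q)) ≤
          (ncyc h' - 2 * nb (orbitSetoid h' ⊔ Q)) + 1 := by
        by_cases hc : h.SameCycle a b
        · -- a and b lie in the same cycle of h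
          have hτh : orbitSetoid τ ≤ orbitSetoid h := hτdef ▸ swap_orbit_le hc
          have hh'le : orbitSetoid h' ≤ orbitSetoid h :=
            hF1b.trans (sup_le le_rfl hτh)
          rcases eq_or_ne (orbitSetoid h') (orbitSetoid h) with heq | heq
          · unfold ncyc
            rw [heq]
            omega
          · have hn1 : nb (orbitSetoid h) ≤ nb (orbitSetoid h') := nb_antitone hh'le
            have hn2 : nb (orbitSetoid h) ≠ nb (orbitSetoid h') := by
              intro he
              exact heq (eq_of_le_of_nb_le hh'le he.ge)
            have hQeq : orbitSetoid h ⊔ Q = (orbitSetoid h' ⊔ Q) ⊔ orbitSetoid τ := by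
              apply le_antisymm
              · refine sup_le (hF1a.trans ?_) ?_
                · exact sup_le_sup_right le_sup_left _
                · exact le_sup_of_le_left le_sup_right
              · refine sup_le (sup_le ?_ le_sup_right) ?_
                · exact le_sup_of_le_left hh'le
                · exact le_sup_of_le_left hτh
            have hF2 : nb (orbitSetoid h' ⊔ Q) - 1 ≤ nb (orbitSetoid h ⊔ Q) := by
              rw [hQeq, hτdef]
              exact nb_sup_swap (orbitSetoid h' ⊔ Q) a b
            unfold ncyc
            omega
        · -- a and b lie in different cycles of h
          have hab' : h'.SameCycle a b := by
            rw [hh'def, hτdef]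
            exact merge_lemma (fun he => hba he.symm) hc
          have hτh' : orbitSetoid τ ≤ orbitSetoid h' := hτdef ▸ swap_orbit_le hab'
          have hle : orbitSetoid h ≤ orbitSetoid h' :=
            hF1a.trans (sup_le le_rfl hτh')
          have hA : nb (orbitSetoid h' ⊔ Q) ≤ nb (orbitSetoid h ⊔ Q) :=
            nb_antitone (sup_le_sup_right hle Q)
          have hcnt : ncyc h - 1 ≤ ncyc h' := by
            have h1 : nb (orbitSetoid h ⊔ orbitSetoid τ) ≤ nb (orbitSetoid h') :=
              nb_antitone hF1b
            have h2 : nb (orbitSetoid h) - 1 ≤ nb (orbitSetoid h ⊔ orbitSetoid τ) := by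
              rw [hτdef]
              exact nb_sup_swap (orbitSetoid h) a b
            unfold ncyc
            omega
          unfold ncyc at hcnt ⊢
          omega
      have := ih h' hcard'
      omega

end RTNAux
namespace RTNAux
open RTN Equiv Equiv.Perm

variable {α : Type*}

lemma pdist_nonneg [Finite α] (p q : Setoid α) : 0 ≤ pdist p q := by
  have h1 : nb (p ⊔ q) ≤ nb p := nb_antitone le_sup_left
  have h2 : nb (p ⊔ q) ≤ nb q := nb_antitone le_sup_right
  unfold pdist
  omega

lemma pdist_self (p : Setoid α) : pdist p p = 0 := by
  unfold pdist
  rw [sup_idem]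
  ring

lemma pdist_bot [Finite α] (p : Setoid α) : pdist p ⊥ = Nat.card α - nb p := by
  unfold pdist
  rw [sup_bot_eq, nb_bot]
  ring

/-- Pulling back the coarse-grained partition recovers the join. -/
lemma comap_coarse (g₀ : Perm α) (p : Setoid α) :
    Setoid.comap (Quotient.mk (orbitSetoid g₀)) (coarse g₀ p) = p ⊔ orbitSetoid g₀ := by
  apply Setoid.ext
  intro x y
  constructor
  · rintro ⟨x', y', hx, hy, hxy⟩
    have h1 : (orbitSetoid g₀).r x x' := Quotient.exact hx.symm
    have h2 : (orbitSetoid g₀).r y' y := Quotient.exact hy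
    have hx1 : (p ⊔ orbitSetoid g₀).r x x' := le_sup_right (α := Setoid α) h1
    have hy1 : (p ⊔ orbitSetoid g₀).r y' y := le_sup_right (α := Setoid α) h2
    exact Setoid.trans' _ (Setoid.trans' _ hx1 hxy) hy1
  · intro hxy
    exact ⟨x, y, rfl, rfl, hxy⟩

lemma nb_coarse [Finite α] (g₀ : Perm α) (p : Setoid α) :
    nb (coarse g₀ p) = nb (p ⊔ orbitSetoid g₀) := by
  have hsurj : Function.Surjective
      (Quotient.mk'' (s₁ := coarse g₀ p) ∘ (Quotient.mk (orbitSetoid g₀))) := by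
    intro u
    obtain ⟨v, rfl⟩ := Quotient.exists_rep u
    obtain ⟨x, rfl⟩ := Quotient.exists_rep v
    exact ⟨x, rfl⟩
  have e1 := Setoid.comapQuotientEquiv (Quotient.mk (orbitSetoid g₀)) (coarse g₀ p)
  rw [comap_coarse] at e1
  have e2 : Set.range (Quotient.mk'' (s₁ := coarse g₀ p) ∘ (Quotient.mk (orbitSetoid g₀)))
      ≃ Quotient (coarse g₀ p) :=
    (Equiv.setCongr (Set.range_eq_univ.2 hsurj)).trans (Equiv.Set.univ _)
  unfold nb
  congr 1
  exact Nat.card_congr (e1.trans e2).symm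

/-- Coarse graining commutes with joins. -/
lemma coarse_sup (g₀ : Perm α) (p p' : Setoid α) :
    coarse g₀ (p ⊔ p') = coarse g₀ p ⊔ coarse g₀ p' := by
  apply le_antisymm
  · rintro u v ⟨x, y, hx, hy, hxy⟩
    subst hx hy
    -- pull back the target setoid
    have hS : (p ⊔ p') ⊔ orbitSetoid g₀ ≤
        Setoid.comap (Quotient.mk (orbitSetoid g₀)) (coarse g₀ p ⊔ coarse g₀ p') := by
      refine sup_le (sup_le ?_ ?_) ?_
      · intro x y hxy
        exact le_sup_left (α := Setoid (Quotient (orbitSetoid g₀)))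
          (⟨x, y, rfl, rfl, le_sup_left (α := Setoid α) hxy⟩ :
            (coarse g₀ p).r _ _)
      · intro x y hxy
        exact le_sup_right (α := Setoid (Quotient (orbitSetoid g₀)))
          (⟨x, y, rfl, rfl, le_sup_left (α := Setoid α) hxy⟩ :
            (coarse g₀ p').r _ _)
      · intro x y hxy
        have : Quotient.mk (orbitSetoid g₀) x = Quotient.mk (orbitSetoid g₀) y :=
          Quotient.sound hxy
        rw [Setoid.comap_rel, this]
    exact hS hxy
  · refine sup_le ?_ ?_ <;>
    · rintro u v ⟨x, y, hx, hy, hxy⟩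
      refine ⟨x, y, hx, hy, ?_⟩
      revert hxy
      apply Setoid.le_def.1
      first
        | exact sup_le_sup_right le_sup_left _
        | exact sup_le_sup_right le_sup_right _

lemma qc_sup (g₀ g h : Perm α) :
    qc g₀ g ⊔ qc g₀ h = coarse g₀ (orbitSetoid g ⊔ orbitSetoid h) :=
  (coarse_sup g₀ _ _).symm

lemma qc_one (g₀ : Perm α) : qc g₀ 1 = ⊥ := by
  apply Setoid.ext
  intro u v
  constructor
  · rintro ⟨x, y, hx, hy, hxy⟩
    rw [orbit_one, bot_sup_eq] at hxy
    subst hx hy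
    exact Quotient.sound hxy
  · rintro rfl
    exact Setoid.refl' _ _

end RTNAux
namespace RTNAux
open RTN Equiv Equiv.Perm

open Fin.NatCast in
lemma finRotate_pow_apply (M : ℕ) (j : ℕ) (x : Fin (M + 1)) :
    ((finRotate (M + 1)) ^ j) x = x + (j : Fin (M + 1)) := by
  induction j with
  | zero => simp
  | succ i ih =>
      rw [pow_succ', Equiv.Perm.mul_apply, ih, finRotate_succ_apply, Nat.cast_add,
        Nat.cast_one, add_assoc]

open Fin.NatCast in
lemma finRotate_reach {M : ℕ} (hM : 0 < M) (x y : Fin M) :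
    ∃ j : ℕ, ((finRotate M) ^ j) x = y := by
  obtain ⟨M', rfl⟩ : ∃ M', M = M' + 1 := ⟨M - 1, by omega⟩
  refine ⟨M' + 1 - x.val + y.val, ?_⟩
  rw [finRotate_pow_apply, Nat.cast_add, ← add_assoc]
  have h2 : x + ((M' + 1 - x.val : ℕ) : Fin (M' + 1)) = 0 := by
    have he : x + ((M' + 1 - x.val : ℕ) : Fin (M' + 1)) =
        ((x.val + (M' + 1 - x.val) : ℕ) : Fin (M' + 1)) := by
      rw [Nat.cast_add, Fin.cast_val_eq_self]
    rw [he, show x.val + (M' + 1 - x.val) = M' + 1 by omega, Fin.natCast_self]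
  rw [h2, zero_add, Fin.cast_val_eq_self]

lemma prodCongr_refl_pow {β γ : Type*} (σ : Equiv.Perm γ) (j : ℕ) (x : β × γ) :
    ((Equiv.prodCongr (Equiv.refl β) σ : Equiv.Perm (β × γ)) ^ j) x = (x.1, (σ ^ j) x.2) := by
  induction j with
  | zero => simp
  | succ i ih =>
      rw [pow_succ', Equiv.Perm.mul_apply, ih, pow_succ', Equiv.Perm.mul_apply]
      rfl

lemma permCongr_pow {β γ : Type*} (e : β ≃ γ) (ρ : Equiv.Perm β) (j : ℕ) (x : γ) :
    ((e.permCongr ρ) ^ j) x = e ((ρ ^ j) (e.symm x)) := by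
  induction j with
  | zero => simp
  | succ i ih =>
      rw [pow_succ', Equiv.Perm.mul_apply, ih, Equiv.permCongr_apply, Equiv.symm_apply_apply,
        pow_succ', Equiv.Perm.mul_apply]

section Endpoints

variable (n m : ℕ)

/-! ### The cycle structure of `g_B` -/

lemma gB_rel (hm0 : 0 < m) (u v : Fin n × Fin m) :
    (orbitSetoid (gB n m)).r u v ↔ u.1 = v.1 := by
  constructor
  · rintro ⟨k, rfl⟩
    exact (invariant_zpow (p := gB n m) (f := Prod.fst) (fun x => rfl) k u).symm
  · intro h
    obtain ⟨j, hj⟩ := finRotate_reach hm0 u.2 v.2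
    refine ⟨(j : ℤ), ?_⟩
    rw [zpow_natCast]
    show ((Equiv.prodCongr (Equiv.refl (Fin n)) (finRotate m)) ^ j) u = v
    rw [prodCongr_refl_pow]
    exact Prod.ext h hj

lemma nb_PgB (hm0 : 0 < m) : nb (orbitSetoid (gB n m)) = (n : ℤ) := by
  rw [nb_eq_of_rel (orbitSetoid (gB n m)) (fun x => x.1) (gB_rel n m hm0)
    (fun k => ⟨(k, ⟨0, hm0⟩), rfl⟩)]
  simp

/-! ### The cycle structure of `X` -/

variable (hm : m % 2 = 0)

/-- Which half of the block an element belongs to. -/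
def half (ℓ : Fin m) : Fin 2 := ((halfEquiv m hm).symm ℓ).1

lemma half_val (ℓ : Fin m) : (half m hm ℓ).val = ℓ.val / (m / 2) := by
  unfold half halfEquiv
  simp only [Equiv.symm_trans_apply]
  rw [show ((finCongr (show 2 * (m / 2) = m by omega)).symm ℓ) =
    Fin.cast (show m = 2 * (m / 2) by omega) ℓ from rfl]
  rfl

lemma div_char (hpar : m % 2 = 0) (hm2 : 2 ≤ m) (ℓ : Fin m) :
    ℓ.val / (m / 2) = if m / 2 ≤ ℓ.val then 1 else 0 := by
  have hh : 0 < m / 2 := by omega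
  have hmm : m = 2 * (m / 2) := by omega
  split
  · next hle =>
      refine Nat.div_eq_of_lt_le (by omega) ?_
      have := ℓ.isLt
      omega
  · next hlt => exact Nat.div_eq_of_lt (by omega)

lemma half_cond (hm2 : 2 ≤ m) {ℓ ℓ' : Fin m} (h : half m hm ℓ = half m hm ℓ') :
    m / 2 ≤ ℓ.val ↔ m / 2 ≤ ℓ'.val := by
  have := congrArg Fin.val h
  rw [half_val, half_val, div_char m hm hm2, div_char m hm hm2] at this
  by_cases h1 : m / 2 ≤ ℓ.val <;> by_cases h2 : m / 2 ≤ ℓ'.val <;>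
    simp [h1, h2] at this ⊢

lemma X_rel (hm2 : 2 ≤ m) (u v : Fin n × Fin m) :
    (orbitSetoid (Xel n m hm)).r u v ↔ u.1 = v.1 ∧ half m hm u.2 = half m hm v.2 := by
  have hX : ∀ x : Fin n × Fin m, Xel n m hm x =
      (x.1, (halfEquiv m hm) ((Equiv.prodCongr (Equiv.refl (Fin 2)) (finRotate (m / 2)))
        ((halfEquiv m hm).symm x.2))) := fun x => rfl
  constructor
  · rintro ⟨k, rfl⟩
    constructor
    · exact (invariant_zpow (p := Xel n m hm) (f := Prod.fst) (fun x => rfl) k u).symm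
    · refine (invariant_zpow (p := Xel n m hm) (f := fun x => half m hm x.2) ?_ k u).symm
      intro x
      rw [hX]
      show half m hm ((halfEquiv m hm) _) = _
      unfold half
      rw [Equiv.symm_apply_apply]
      rfl
  · rintro ⟨h1, h2⟩
    have hpos : 0 < m / 2 := by omega
    obtain ⟨j, hj⟩ := finRotate_reach hpos ((halfEquiv m hm).symm u.2).2
      ((halfEquiv m hm).symm v.2).2
    refine ⟨(j : ℤ), ?_⟩
    rw [zpow_natCast]
    show ((Equiv.prodCongr (Equiv.refl (Fin n))
      ((halfEquiv m hm).permCongr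
        (Equiv.prodCongr (Equiv.refl (Fin 2)) (finRotate (m / 2))))) ^ j) u = v
    rw [prodCongr_refl_pow, permCongr_pow]
    refine Prod.ext h1 ?_
    show (halfEquiv m hm) _ = v.2
    rw [prodCongr_refl_pow]
    have : ((((halfEquiv m hm).symm u.2).1 : Fin 2),
        ((finRotate (m / 2)) ^ j) (((halfEquiv m hm).symm u.2).2)) =
        (halfEquiv m hm).symm v.2 := Prod.ext h2 hj
    rw [this, Equiv.apply_symm_apply]

lemma nb_PX (hm2 : 2 ≤ m) : nb (orbitSetoid (Xel n m hm)) = 2 * (n : ℤ) := by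
  rw [nb_eq_of_rel (orbitSetoid (Xel n m hm)) (fun x => (x.1, half m hm x.2))
    (by
      intro x y
      rw [X_rel n m hm hm2, Prod.ext_iff])
    (by
      rintro ⟨k, i⟩
      refine ⟨(k, (halfEquiv m hm) (i, ⟨0, by omega⟩)), Prod.ext rfl ?_⟩
      show half m hm ((halfEquiv m hm) (i, ⟨0, by omega⟩)) = i
      unfold half
      rw [Equiv.symm_apply_apply])]
  rw [Nat.card_eq_fintype_card]
  simp [mul_comm]

/-! ### The cycle structure of `g_A` -/

lemma gA_zpow (k : ℤ) :
    (gA n m) ^ k = (gamma n m)⁻¹ * (gB n m) ^ k * (gamma n m) := by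
  have h : gA n m = (gamma n m)⁻¹ * gB n m * ((gamma n m)⁻¹)⁻¹ := by
    rw [inv_inv]; rfl
  rw [h, conj_zpow, inv_inv]

lemma gA_rel (hm0 : 0 < m) (u v : Fin n × Fin m) :
    (orbitSetoid (gA n m)).r u v ↔ (gamma n m u).1 = (gamma n m v).1 := by
  have key : ∀ u v : Fin n × Fin m,
      (orbitSetoid (gA n m)).r u v ↔ (orbitSetoid (gB n m)).r (gamma n m u) (gamma n m v) := by
    intro u v
    constructor
    · rintro ⟨k, rfl⟩
      refine ⟨k, ?_⟩
      rw [gA_zpow, Equiv.Perm.mul_apply, Equiv.Perm.mul_apply, Equiv.Perm.apply_inv_self]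
    · rintro ⟨k, hk⟩
      refine ⟨k, ?_⟩
      rw [gA_zpow, Equiv.Perm.mul_apply, Equiv.Perm.mul_apply, hk]
      exact Equiv.Perm.inv_eq_iff_eq.2 rfl
  rw [key, gB_rel n m hm0]

lemma nb_PgA (hm0 : 0 < m) : nb (orbitSetoid (gA n m)) = (n : ℤ) := by
  rw [nb_eq_of_rel (orbitSetoid (gA n m)) (fun x => (gamma n m x).1)
    (gA_rel n m hm0)
    (fun k => ⟨(gamma n m).symm (k, ⟨0, hm0⟩), by
      show ((gamma n m) ((gamma n m).symm (k, ⟨0, hm0⟩))).1 = k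
      rw [Equiv.apply_symm_apply]⟩)]
  simp

lemma gamma_fst (x : Fin n × Fin m) :
    (gamma n m x).1 = if m / 2 ≤ (x.2 : ℕ) then finRotate n x.1 else x.1 := by
  show ((if m / 2 ≤ (x.2 : ℕ) then (finRotate n x.1, x.2) else x) : Fin n × Fin m).1 = _
  split <;> rfl

lemma PX_le_PgB (hm2 : 2 ≤ m) : orbitSetoid (Xel n m hm) ≤ orbitSetoid (gB n m) := by
  intro x y hxy
  rw [gB_rel n m (by omega)]
  exact ((X_rel n m hm hm2 x y).1 hxy).1

lemma PX_le_PgA (hm2 : 2 ≤ m) : orbitSetoid (Xel n m hm) ≤ orbitSetoid (gA n m) := by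
  intro x y hxy
  obtain ⟨h1, h2⟩ := (X_rel n m hm hm2 x y).1 hxy
  rw [gA_rel n m (by omega), gamma_fst, gamma_fst]
  have hiff := half_cond m hm hm2 h2
  by_cases hx : m / 2 ≤ (x.2 : ℕ)
  · rw [if_pos hx, if_pos (hiff.1 hx), h1]
  · rw [if_neg hx, if_neg (fun hy => hx (hiff.2 hy)), h1]

end Endpoints

end RTNAux
namespace RTNAux
open RTN Equiv Equiv.Perm

section Phi

variable (n m : ℕ) (hm : m % 2 = 0)

/-- The potential function `φ(g) = d(g,1) - d(q_X(g), q_X(1))`. -/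
def PHI (g : Perm (Fin n × Fin m)) : ℤ :=
  cayley g 1 - pdist (qc (Xel n m hm) g) (qc (Xel n m hm) 1)

lemma cayley_one (g : Perm (Fin n × Fin m)) :
    cayley g 1 = (Fintype.card (Fin n × Fin m) : ℤ) - ncyc g := by
  unfold cayley
  rw [inv_one, mul_one]

lemma nb_qc (g : Perm (Fin n × Fin m)) :
    nb (qc (Xel n m hm) g) = nb (orbitSetoid g ⊔ orbitSetoid (Xel n m hm)) :=
  nb_coarse _ _

lemma PHI_eq (g : Perm (Fin n × Fin m)) :
    PHI n m hm g = (Fintype.card (Fin n × Fin m) : ℤ) - ncyc g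
      - nb (orbitSetoid (Xel n m hm)) + nb (orbitSetoid g ⊔ orbitSetoid (Xel n m hm)) := by
  unfold PHI
  rw [cayley_one, qc_one, pdist_bot, nb_qc]
  have : ((Nat.card (BX n m hm) : ℤ)) = nb (orbitSetoid (Xel n m hm)) := rfl
  rw [this]
  ring

lemma edge_bound (g h : Perm (Fin n × Fin m)) :
    pdist (qc (Xel n m hm) g) (qc (Xel n m hm) h) + |PHI n m hm g - PHI n m hm h| ≤
      cayley g h := by
  have hpd : pdist (qc (Xel n m hm) g) (qc (Xel n m hm) h) =
      nb (orbitSetoid g ⊔ orbitSetoid (Xel n m hm)) + nb (orbitSetoid h ⊔ orbitSetoid (Xel n m hm)) - 2 * nb ((orbitSetoid g ⊔ orbitSetoid h) ⊔ orbitSetoid (Xel n m hm)) := by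
    unfold pdist
    rw [nb_qc, nb_qc, qc_sup, nb_coarse]
  have e1 : orbitSetoid h ⊔ (orbitSetoid g ⊔ orbitSetoid (Xel n m hm)) = (orbitSetoid g ⊔ orbitSetoid h) ⊔ orbitSetoid (Xel n m hm) := by
    rw [← sup_assoc, sup_comm (orbitSetoid h) (orbitSetoid g)]
  have e2 : orbitSetoid g ⊔ (orbitSetoid g ⊔ orbitSetoid (Xel n m hm)) = orbitSetoid g ⊔ orbitSetoid (Xel n m hm) := by rw [← sup_assoc, sup_idem]
  have e3 : orbitSetoid g ⊔ (orbitSetoid h ⊔ orbitSetoid (Xel n m hm)) = (orbitSetoid g ⊔ orbitSetoid h) ⊔ orbitSetoid (Xel n m hm) := by rw [← sup_assoc]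
  have e4 : orbitSetoid h ⊔ (orbitSetoid h ⊔ orbitSetoid (Xel n m hm)) = orbitSetoid h ⊔ orbitSetoid (Xel n m hm) := by rw [← sup_assoc, sup_idem]
  have hcore1 := core (orbitSetoid g ⊔ orbitSetoid (Xel n m hm)) g h
  rw [e1, e2] at hcore1
  have hcore2 := core (orbitSetoid h ⊔ orbitSetoid (Xel n m hm)) h g
  rw [e3, e4, cayley_comm h g] at hcore2
  have habs : |PHI n m hm g - PHI n m hm h| ≤ cayley g h - pdist (qc (Xel n m hm) g) (qc (Xel n m hm) h) := by
    rw [hpd, PHI_eq, PHI_eq]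
    rw [abs_le]
    constructor
    · omega
    · omega
  have hnn : 0 ≤ |PHI n m hm g - PHI n m hm h| := abs_nonneg _
  omega

lemma PHI_one : PHI n m hm 1 = 0 := by
  unfold PHI
  rw [cayley_self, pdist_self]
  ring

lemma card_nm : (Fintype.card (Fin n × Fin m) : ℤ) = (n : ℤ) * m := by
  rw [Fintype.card_prod, Fintype.card_fin, Fintype.card_fin]
  push_cast
  ring

lemma PHI_gB (hm2 : 2 ≤ m) : PHI n m hm (gB n m) = (n : ℤ) * m - 2 * n := by
  rw [PHI_eq, card_nm]
  have h1 : ncyc (gB n m) = (n : ℤ) := nb_PgB n m (by omega)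
  have h2 : nb (orbitSetoid (Xel n m hm)) = 2 * (n : ℤ) := nb_PX n m hm hm2
  have h3 : orbitSetoid (gB n m) ⊔ orbitSetoid (Xel n m hm) = orbitSetoid (gB n m) :=
    sup_eq_left.mpr (PX_le_PgB n m hm hm2)
  rw [h1, h2, h3]
  have h4 : nb (orbitSetoid (gB n m)) = (n : ℤ) := nb_PgB n m (by omega)
  rw [h4]
  ring

lemma PHI_gA (hm2 : 2 ≤ m) : PHI n m hm (gA n m) = (n : ℤ) * m - 2 * n := by
  rw [PHI_eq, card_nm]
  have h1 : ncyc (gA n m) = (n : ℤ) := nb_PgA n m (by omega)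
  have h2 : nb (orbitSetoid (Xel n m hm)) = 2 * (n : ℤ) := nb_PX n m hm hm2
  have h3 : orbitSetoid (gA n m) ⊔ orbitSetoid (Xel n m hm) = orbitSetoid (gA n m) :=
    sup_eq_left.mpr (PX_le_PgA n m hm hm2)
  rw [h1, h2, h3]
  have h4 : nb (orbitSetoid (gA n m)) = (n : ℤ) := nb_PgA n m (by omega)
  rw [h4]
  ring

end Phi

end RTNAux
namespace RTNAux
open RTN Equiv Equiv.Perm

variable {V : Type*} [Fintype V]

lemma wsum_nonneg {w : Sym2 V → ℝ} (hw : ∀ e, 0 ≤ w e) (S : Set (Sym2 V)) :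
    0 ≤ wsum w S :=
  Finset.sum_nonneg fun e _ => hw e

lemma partEZ_nonneg {κ : Type*} [Finite κ] (q : V → Setoid κ) (e : Sym2 V) :
    0 ≤ partEZ q e := by
  induction e with
  | _ x y =>
      show (0 : ℤ) ≤ partEZ q s(x, y)
      unfold partEZ
      rw [Sym2.lift_mk]
      exact pdist_nonneg _ _

lemma qenergy_nonneg {κ : Type*} [Finite κ] {G : SimpleGraph V} {w : Sym2 V → ℝ}
    (hw : ∀ e, 0 ≤ w e) (q : V → Setoid κ) : 0 ≤ Qenergy G w q :=
  Finset.sum_nonneg fun e _ =>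
    mul_nonneg (hw e) (by exact_mod_cast partEZ_nonneg q e)

lemma mu_mem_iff {G : SimpleGraph V} {x y : V} (hxy : s(x, y) ∈ G.edgeSet)
    (r : Set V) :
    s(x, y) ∈ mu G r ↔ ((x ∈ r ∧ y ∉ r) ∨ (y ∈ r ∧ x ∉ r)) := by
  constructor
  · rintro ⟨-, x', y', hexy, hx', hy'⟩
    rcases Sym2.eq_iff.1 hexy with ⟨rfl, rfl⟩ | ⟨rfl, rfl⟩
    · exact Or.inl ⟨hx', hy'⟩
    · exact Or.inr ⟨hx', hy'⟩
  · rintro (⟨hx, hy⟩ | ⟨hy, hx⟩)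
    · exact ⟨hxy, x, y, rfl, hx, hy⟩
    · exact ⟨hxy, y, x, Sym2.eq_swap, hy, hx⟩

lemma wsum_mu_eq (G : SimpleGraph V) (w : Sym2 V → ℝ) (r : Set V) :
    wsum w (mu G r) =
      ∑ e ∈ Finset.univ.filter (· ∈ G.edgeSet), (if e ∈ mu G r then w e else 0) := by
  unfold wsum
  rw [Finset.sum_filter, Finset.sum_filter]
  apply Finset.sum_congr rfl
  intro e _
  by_cases hmu : e ∈ mu G r
  · simp [hmu, hmu.1]
  · by_cases hE : e ∈ G.edgeSet <;> simp [hmu, hE]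

lemma indicator_count (a b : ℤ) (T : ℕ) :
    (((Finset.Icc (1 : ℤ) (T : ℤ)).filter
      (fun t => (t ≤ a ∧ ¬ t ≤ b) ∨ (t ≤ b ∧ ¬ t ≤ a))).card : ℤ) ≤ |a - b| := by
  have hsub : ((Finset.Icc (1 : ℤ) (T : ℤ)).filter
      (fun t => (t ≤ a ∧ ¬ t ≤ b) ∨ (t ≤ b ∧ ¬ t ≤ a))) ⊆
      Finset.Ioc (min a b) (max a b) := by
    intro t ht
    rw [Finset.mem_filter] at ht
    rw [Finset.mem_Ioc]
    rcases ht.2 with ⟨h1, h2⟩ | ⟨h1, h2⟩ <;>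
      constructor <;> omega
  have := Finset.card_le_card hsub
  rw [Int.card_Ioc] at this
  have habs : max a b - min a b = |b - a| := max_sub_min_eq_abs a b
  have habs2 : |b - a| = |a - b| := abs_sub_comm b a
  omega

end RTNAux
/-- The permutation optimization dominates the set-partition
optimization: `R ≥ 𝒜(A∪B:C)·n(m-2) + Q`. -/
theorem R_ge_minCut_add_Q {V : Type*} [Fintype V] (G : SimpleGraph V)
    (w : Sym2 V → ℝ) (hw : ∀ e, 0 ≤ w e) (A B C : Set V) (hbdy : RTN.Bdy A B C)
    {n m : ℕ} (hn : 2 ≤ n) (hm2 : 2 ≤ m) (hm : m % 2 = 0) :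
    RTN.Rval G w A B C (RTN.gA n m) (RTN.gB n m) ≥
      RTN.minCut G w (A ∪ B) C * ((n : ℝ) * ((m : ℝ) - 2)) +
      RTN.Qval G w A B C (RTN.qAel n m hm) (RTN.qBel n m hm) := by
  classical
  set X := RTN.Xel n m hm with hXdef
  set T : ℕ := n * (m - 2) with hTdef
  have hTcast : (T : ℤ) = (n : ℤ) * m - 2 * n := by
    rw [hTdef]
    have h2 : ((m - 2 : ℕ) : ℤ) = (m : ℤ) - 2 := by omega
    push_cast [h2]
    ring
  have hTcastR : (T : ℝ) = (n : ℝ) * ((m : ℝ) - 2) := by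
    rw [hTdef]
    have h2 : ((m - 2 : ℕ) : ℝ) = (m : ℝ) - 2 := by
      have : ((m - 2 : ℕ) : ℝ) = ((m : ℕ) : ℝ) - ((2 : ℕ) : ℝ) := by
        rw [Nat.cast_sub hm2]
      simpa using this
    push_cast [h2]
    ring
  have hphiA : RTNAux.PHI n m hm (RTN.gA n m) = (T : ℤ) := by
    rw [RTNAux.PHI_gA n m hm hm2, hTcast]
  have hphiB : RTNAux.PHI n m hm (RTN.gB n m) = (T : ℤ) := by
    rw [RTNAux.PHI_gB n m hm hm2, hTcast]
  rw [ge_iff_le]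
  unfold RTN.Rval
  apply le_csInf
  · refine ⟨RTN.Renergy G w
      (fun v => if v ∈ A then RTN.gA n m else if v ∈ B then RTN.gB n m else 1),
      ⟨_, ?_, ?_, ?_, rfl⟩⟩
    · intro v hv; simp [hv]
    · intro v hv
      have hvA : v ∉ A := Set.disjoint_right.1 hbdy.1 hv
      simp [hvA, hv]
    · intro v hv
      have h1 : v ∉ A := Set.disjoint_right.1 hbdy.2.1 hv
      have h2 : v ∉ B := Set.disjoint_right.1 hbdy.2.2 hv
      simp [h1, h2]
  rintro a ⟨g, hgA, hgB, hgC, rfl⟩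
  set q : V → Setoid (RTN.BX n m hm) := fun v => RTN.qc X (g v) with hqdef
  set φ : V → ℤ := fun v => RTNAux.PHI n m hm (g v) with hφdef
  -- the set-partition optimum is dominated by the induced configuration
  have hQle : RTN.Qval G w A B C (RTN.qAel n m hm) (RTN.qBel n m hm) ≤
      RTN.Qenergy G w q := by
    apply csInf_le
    · refine ⟨0, ?_⟩
      rintro x ⟨q', -, -, -, rfl⟩
      exact RTNAux.qenergy_nonneg hw q'
    · refine ⟨q, ?_, ?_, ?_, rfl⟩
      · intro v hv
        show RTN.qc X (g v) = _
        rw [hgA v hv]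
        rfl
      · intro v hv
        show RTN.qc X (g v) = _
        rw [hgB v hv]
        rfl
      · intro v hv
        show RTN.qc X (g v) = _
        rw [hgC v hv]
        exact RTNAux.qc_one X
  -- each level set is a cut
  have hcut : ∀ t : ℤ, 1 ≤ t → t ≤ (T : ℤ) →
      RTN.minCut G w (A ∪ B) C ≤ RTN.wsum w (RTN.mu G {v | t ≤ φ v}) := by
    intro t ht1 ht2
    apply csInf_le
    · refine ⟨0, ?_⟩
      rintro x ⟨r, -, rfl⟩
      exact RTNAux.wsum_nonneg hw _
    · refine ⟨{v | t ≤ φ v}, ⟨?_, ?_⟩, rfl⟩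
      · rintro v (hv | hv)
        · show t ≤ φ v
          show t ≤ RTNAux.PHI n m hm (g v)
          rw [hgA v hv, hphiA]
          exact ht2
        · show t ≤ φ v
          show t ≤ RTNAux.PHI n m hm (g v)
          rw [hgB v hv, hphiB]
          exact ht2
      · intro v hv
        show ¬ t ≤ φ v
        show ¬ t ≤ RTNAux.PHI n m hm (g v)
        rw [hgC v hv, RTNAux.PHI_one]
        omega
  set F := Finset.univ.filter (· ∈ G.edgeSet) with hFdef
  set IND : Sym2 V → ℝ := fun e =>
    ∑ t ∈ Finset.Icc (1 : ℤ) (T : ℤ),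
      (if e ∈ RTN.mu G {v | t ≤ φ v} then (1 : ℝ) else 0) with hINDdef
  -- per edge inequality
  have hedge : ∀ e ∈ F, w e * ((RTN.partEZ q e : ℝ) + IND e) ≤ w e * RTN.permE g e := by
    intro e heF
    have heE : e ∈ G.edgeSet := (Finset.mem_filter.1 heF).2
    induction e with
    | _ x y =>
      apply mul_le_mul_of_nonneg_left _ (hw _)
      have hperm : RTN.permE g s(x, y) = ((RTN.cayley (g x) (g y) : ℤ) : ℝ) := by
        unfold RTN.permE
        rw [Sym2.lift_mk]
      have hpart : RTN.partEZ q s(x, y) = RTN.pdist (q x) (q y) := by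
        unfold RTN.partEZ
        rw [Sym2.lift_mk]
      have hindsum : IND s(x, y) ≤ |(φ x : ℝ) - (φ y : ℝ)| := by
        show (∑ t ∈ Finset.Icc (1 : ℤ) (T : ℤ),
          (if s(x, y) ∈ RTN.mu G {v | t ≤ φ v} then (1 : ℝ) else 0)) ≤ _
        have hconv : ∀ t ∈ Finset.Icc (1 : ℤ) (T : ℤ),
            (if s(x, y) ∈ RTN.mu G {v | t ≤ φ v} then (1 : ℝ) else 0) =
            (if (t ≤ φ x ∧ ¬ t ≤ φ y) ∨ (t ≤ φ y ∧ ¬ t ≤ φ x) then (1 : ℝ) else 0) := by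
          intro t _
          refine if_congr ?_ rfl rfl
          exact RTNAux.mu_mem_iff heE _
        rw [Finset.sum_congr rfl hconv, Finset.sum_boole]
        have hcount := RTNAux.indicator_count (φ x) (φ y) T
        push_cast at hcount ⊢
        exact_mod_cast hcount
      have hbound := RTNAux.edge_bound n m hm (g x) (g y)
      have hboundR : (RTN.pdist (RTN.qc X (g x)) (RTN.qc X (g y)) : ℝ) +
          |(φ x : ℝ) - (φ y : ℝ)| ≤ ((RTN.cayley (g x) (g y) : ℤ) : ℝ) := by
        have : ((RTN.pdist (RTN.qc (RTN.Xel n m hm) (g x)) (RTN.qc (RTN.Xel n m hm) (g y)) +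
            |RTNAux.PHI n m hm (g x) - RTNAux.PHI n m hm (g y)| : ℤ) : ℝ) ≤
            ((RTN.cayley (g x) (g y) : ℤ) : ℝ) := by
          exact_mod_cast hbound
        push_cast at this
        convert this using 2
      rw [hperm, hpart]
      have hqx : q x = RTN.qc X (g x) := rfl
      have hqy : q y = RTN.qc X (g y) := rfl
      rw [hqx, hqy]
      calc (RTN.pdist (RTN.qc X (g x)) (RTN.qc X (g y)) : ℝ) + IND s(x, y)
          ≤ (RTN.pdist (RTN.qc X (g x)) (RTN.qc X (g y)) : ℝ) +
            |(φ x : ℝ) - (φ y : ℝ)| := by linarith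
        _ ≤ _ := hboundR
  -- summing
  have hReq : RTN.Renergy G w g = ∑ e ∈ F, w e * RTN.permE g e := by
    unfold RTN.Renergy RTN.wsum
    rw [hFdef]
    exact Finset.sum_congr (Finset.filter_congr_decidable _ _ _) (fun _ _ => rfl)
  have hsum1 : ∑ e ∈ F, w e * ((RTN.partEZ q e : ℝ) + IND e) ≤ RTN.Renergy G w g := by
    rw [hReq]
    exact Finset.sum_le_sum hedge
  have hQeq : RTN.Qenergy G w q = ∑ e ∈ F, w e * (RTN.partEZ q e : ℝ) := by
    unfold RTN.Qenergy RTN.wsum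
    rw [hFdef]
    exact Finset.sum_congr (Finset.filter_congr_decidable _ _ _) (fun _ _ => rfl)
  have hsplit : ∑ e ∈ F, w e * ((RTN.partEZ q e : ℝ) + IND e) =
      RTN.Qenergy G w q + ∑ e ∈ F, w e * IND e := by
    rw [hQeq, ← Finset.sum_add_distrib]
    apply Finset.sum_congr rfl
    intro e _
    ring
  have hswap : ∑ e ∈ F, w e * IND e =
      ∑ t ∈ Finset.Icc (1 : ℤ) (T : ℤ), RTN.wsum w (RTN.mu G {v | t ≤ φ v}) := by
    rw [hINDdef]
    simp only [Finset.mul_sum]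
    rw [Finset.sum_comm]
    apply Finset.sum_congr rfl
    intro t _
    rw [RTNAux.wsum_mu_eq]
    apply Finset.sum_congr rfl
    intro e _
    by_cases hmu : e ∈ RTN.mu G {v | t ≤ φ v} <;> simp [hmu]
  have hlev : (T : ℝ) * RTN.minCut G w (A ∪ B) C ≤
      ∑ t ∈ Finset.Icc (1 : ℤ) (T : ℤ), RTN.wsum w (RTN.mu G {v | t ≤ φ v}) := by
    have hcard : (Finset.Icc (1 : ℤ) (T : ℤ)).card = T := by
      rw [Int.card_Icc]
      omega
    have := Finset.card_nsmul_le_sum (Finset.Icc (1 : ℤ) (T : ℤ))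
      (fun t => RTN.wsum w (RTN.mu G {v | t ≤ φ v}))
      (RTN.minCut G w (A ∪ B) C)
      (fun t ht => by
        rw [Finset.mem_Icc] at ht
        exact hcut t ht.1 ht.2)
    rw [hcard, nsmul_eq_mul] at this
    exact this
  have hfin : RTN.Qenergy G w q + (T : ℝ) * RTN.minCut G w (A ∪ B) C ≤
      RTN.Renergy G w g := by
    rw [hsplit, hswap] at hsum1
    linarith
  rw [hTcastR] at hfin
  linarith
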